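/- Let x^o = (D^T D)^{-1} D^T y be the least-squares solution for the model y ≈ D x with D = [W Z], and partition x^o = col{x_W^o, x_Z^o} with x_W^o ∈ R^P. Then W x_W^o = E_WZ y, where E_WZ = W (W^T P_Z^perp W)^{-1} W^T P_Z^perp. -/

import Mathlib

open Matrix

theorem least_squares_oblique_projection {N P L : ℕ}
    (W : Matrix (Fin N) (Fin P) ℝ) (Z : Matrix (Fin N) (Fin L) ℝ)
    (hW : Wᵀ * W = 1) (hZ : Zᵀ * Z = 1)
    (hrank : (fromCols W Z).rank = P + L)
    (hD : IsUnit ((fromCols W Z)ᵀ * fromCols W Z))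
    (hY : IsUnit (Wᵀ * (1 - Z * Zᵀ) * W))
    (y : Fin N → ℝ) :
    W.mulVec (fun p : Fin P =>
        (((fromCols W Z)ᵀ * fromCols W Z)⁻¹ * (fromCols W Z)ᵀ).mulVec y (Sum.inl p)) =
      (W * (Wᵀ * (1 - Z * Zᵀ) * W)⁻¹ * Wᵀ * (1 - Z * Zᵀ)).mulVec y := by
  set A := Wᵀ * Z with hA
  set S := (1 : Matrix (Fin P) (Fin P) ℝ) - A * Aᵀ with hSdef
  clear_value S
  have hS : Wᵀ * (1 - Z * Zᵀ) * W = S := by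
    rw [hSdef, hA, transpose_mul, transpose_transpose]
    rw [Matrix.mul_sub, Matrix.mul_one, Matrix.sub_mul, hW]
    rw [Matrix.mul_assoc, Matrix.mul_assoc, Matrix.mul_assoc]
  have hSunit : IsUnit S := hS ▸ hY
  have hSdet : IsUnit S.det := (Matrix.isUnit_iff_isUnit_det S).mp hSunit
  have hSS : S * S⁻¹ = 1 := Matrix.mul_nonsing_inv S hSdet
  have keysub : S⁻¹ - A * Aᵀ * S⁻¹ = 1 := by
    have := hSS
    rw [hSdef, Matrix.sub_mul, Matrix.one_mul, ← hSdef] at this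
    exact this
  have hM : (fromCols W Z)ᵀ * fromCols W Z = fromBlocks 1 A Aᵀ 1 := by
    rw [transpose_fromCols, fromRows_mul_fromCols, hW, hZ, hA, transpose_mul,
      transpose_transpose]
  have hE : (fromCols W Z)ᵀ * fromCols W Z *
      fromBlocks S⁻¹ (-(S⁻¹ * A)) (-(Aᵀ * S⁻¹)) (1 + Aᵀ * S⁻¹ * A) = 1 := by
    have h1 : (1 : Matrix (Fin P) (Fin P) ℝ) * S⁻¹ + A * -(Aᵀ * S⁻¹) = 1 := by
      have h : (1 : Matrix (Fin P) (Fin P) ℝ) * S⁻¹ + A * -(Aᵀ * S⁻¹) =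
          S⁻¹ - A * Aᵀ * S⁻¹ := by
        simp only [Matrix.one_mul, Matrix.mul_neg, ← Matrix.mul_assoc, ← sub_eq_add_neg]
      rw [h, keysub]
    have h2 : (1 : Matrix (Fin P) (Fin P) ℝ) * -(S⁻¹ * A) + A * (1 + Aᵀ * S⁻¹ * A) = 0 := by
      have h : (1 : Matrix (Fin P) (Fin P) ℝ) * -(S⁻¹ * A) + A * (1 + Aᵀ * S⁻¹ * A) =
          A - (S⁻¹ - A * Aᵀ * S⁻¹) * A := by
        simp only [Matrix.one_mul, Matrix.mul_add, Matrix.mul_one, Matrix.sub_mul,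
          Matrix.mul_assoc]
        abel
      rw [h, keysub, Matrix.one_mul, sub_self]
    have h3 : Aᵀ * S⁻¹ + (1 : Matrix (Fin L) (Fin L) ℝ) * -(Aᵀ * S⁻¹) = 0 := by
      rw [Matrix.one_mul, add_neg_cancel]
    have h4 : Aᵀ * -(S⁻¹ * A) + (1 : Matrix (Fin L) (Fin L) ℝ) * (1 + Aᵀ * S⁻¹ * A) = 1 := by
      rw [Matrix.mul_neg, Matrix.one_mul, Matrix.mul_assoc, neg_add_cancel_comm_assoc]
    rw [hM, fromBlocks_multiply, h1, h2, h3, h4, fromBlocks_one]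
  have hInv : ((fromCols W Z)ᵀ * fromCols W Z)⁻¹ =
      fromBlocks S⁻¹ (-(S⁻¹ * A)) (-(Aᵀ * S⁻¹)) (1 + Aᵀ * S⁻¹ * A) :=
    Matrix.inv_eq_right_inv hE
  rw [hS, hInv, transpose_fromCols, fromBlocks_mul_fromRows]
  have hrow : (fun p : Fin P =>
      (fromRows (S⁻¹ * Wᵀ + -(S⁻¹ * A) * Zᵀ)
        (-(Aᵀ * S⁻¹) * Wᵀ + (1 + Aᵀ * S⁻¹ * A) * Zᵀ)).mulVec y (Sum.inl p)) =
      (S⁻¹ * Wᵀ + -(S⁻¹ * A) * Zᵀ).mulVec y := by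
    funext p
    rw [fromRows_mulVec]
    rfl
  rw [hrow, mulVec_mulVec]
  congr 1
  rw [hA]
  simp only [Matrix.mul_add, Matrix.mul_sub, Matrix.mul_one, Matrix.mul_neg, Matrix.neg_mul,
    Matrix.mul_assoc, sub_eq_add_neg]
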